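/- For n ≥ 4, the vertex set of the standard n-demihypercube DC_n — the set of points (±1,...,±1) ∈ ℝ^n with an even number of minus signs — is 3-point homogeneous under the group of signed coordinate permutations preserving DC_n (all coordinate permutations and sign changes of an even number of coordinates). -/

import Mathlib

/-- The vertex set of the standard `n`-demihypercube: points of `{−1,1}ⁿ` with
an even number of `−1` coordinates. -/
def demicubeVertices (n : ℕ) : Set (EuclideanSpace ℝ (Fin n)) :=
  {x | (∀ i, x i = 1 ∨ x i = -1) ∧
    Even (Finset.univ.filter (fun i => x i = -1)).card}

open Finset
attribute [local instance] Classical.propDecidable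

private lemma dist_sq_eq' {n : ℕ} {x y : EuclideanSpace ℝ (Fin n)}
    (hx : ∀ i, x i = 1 ∨ x i = -1) (hy : ∀ i, y i = 1 ∨ y i = -1) :
    dist x y ^ 2 = 4 * ((univ.filter fun i => ¬ x i = y i).card : ℝ) := by
  rw [EuclideanSpace.dist_eq, Real.sq_sqrt (by positivity)]
  rw [Finset.card_filter]
  push_cast
  rw [Finset.mul_sum]
  refine Finset.sum_congr rfl fun i _ => ?_
  rcases hx i with h | h <;> rcases hy i with h' | h' <;>
    simp [h, h', Real.dist_eq] <;> norm_num

private lemma ham_of_dist' {n : ℕ} {x y z w : EuclideanSpace ℝ (Fin n)}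
    (hx : ∀ i, x i = 1 ∨ x i = -1) (hy : ∀ i, y i = 1 ∨ y i = -1)
    (hz : ∀ i, z i = 1 ∨ z i = -1) (hw : ∀ i, w i = 1 ∨ w i = -1)
    (h : dist x y = dist z w) :
    (univ.filter fun i => ¬ x i = y i).card = (univ.filter fun i => ¬ z i = w i).card := by
  have h2 : dist x y ^ 2 = dist z w ^ 2 := by rw [h]
  rw [dist_sq_eq' hx hy, dist_sq_eq' hz hw] at h2
  have : ((univ.filter fun i => ¬ x i = y i).card : ℝ)
      = ((univ.filter fun i => ¬ z i = w i).card : ℝ) := by linarith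
  exact_mod_cast this

private lemma pattern_sum' {n : ℕ} (x0 x1 x2 : EuclideanSpace ℝ (Fin n))
    (h0 : ∀ i, x0 i = 1 ∨ x0 i = -1) (h1 : ∀ i, x1 i = 1 ∨ x1 i = -1)
    (h2 : ∀ i, x2 i = 1 ∨ x2 i = -1) (v : Bool × Bool) :
    ∑ i : Fin n,
      ((if ((if x1 i = x0 i then true else false), (if x2 i = x0 i then true else false)) = v then (2:ℤ) else 0)
        + (if v.1 then 1 else -1) * (if x0 i = x1 i then 0 else 1)
        + (if v.2 then 1 else -1) * (if x0 i = x2 i then 0 else 1)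
        + (if v.1 = v.2 then 1 else -1) * (if x1 i = x2 i then 0 else 1))
    = (if v.1 && v.2 then 2 * n else 0) := by
  have hpt : ∀ i ∈ univ,
      ((if ((if x1 i = x0 i then true else false), (if x2 i = x0 i then true else false)) = v then (2:ℤ) else 0)
        + (if v.1 then 1 else -1) * (if x0 i = x1 i then 0 else 1)
        + (if v.2 then 1 else -1) * (if x0 i = x2 i then 0 else 1)
        + (if v.1 = v.2 then 1 else -1) * (if x1 i = x2 i then 0 else 1))
      = (if v.1 && v.2 then (2:ℤ) else 0) := by
    intro i _
    rcases h0 i with a0 | a0 <;> rcases h1 i with a1 | a1 <;> rcases h2 i with a2 | a2 <;>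
      rcases v with ⟨b1, b2⟩ <;> rcases b1 <;> rcases b2 <;>
      simp [a0, a1, a2] <;> norm_num
  rw [Finset.sum_congr rfl hpt, Finset.sum_const, card_univ, Fintype.card_fin]
  rcases v with ⟨b1, b2⟩ <;> rcases b1 <;> rcases b2 <;> simp [mul_comm]

private lemma sum_split' {n : ℕ} (p q r s : Fin n → Prop)
    [DecidablePred p] [DecidablePred q] [DecidablePred r] [DecidablePred s] (t1 t2 t3 : ℤ) :
    ∑ i : Fin n, ((if p i then (2:ℤ) else 0) + t1 * (if q i then 0 else 1)
      + t2 * (if r i then 0 else 1) + t3 * (if s i then 0 else 1))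
    = 2 * (univ.filter p).card + t1 * (univ.filter fun i => ¬ q i).card
      + t2 * (univ.filter fun i => ¬ r i).card + t3 * (univ.filter fun i => ¬ s i).card := by
  rw [Finset.sum_add_distrib, Finset.sum_add_distrib, Finset.sum_add_distrib,
    ← Finset.mul_sum, ← Finset.mul_sum, ← Finset.mul_sum,
    Finset.card_filter, Finset.card_filter, Finset.card_filter, Finset.card_filter]
  push_cast
  congr 1
  congr 1
  congr 1
  · rw [Finset.mul_sum]
    exact Finset.sum_congr rfl fun i _ => by by_cases h : p i <;> simp [h]
  · congr 1
    exact Finset.sum_congr rfl fun i _ => by by_cases h : q i <;> simp [h]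
  · congr 1
    exact Finset.sum_congr rfl fun i _ => by by_cases h : r i <;> simp [h]
  · congr 1
    exact Finset.sum_congr rfl fun i _ => by by_cases h : s i <;> simp [h]

private lemma count_eq' {n : ℕ} (x0 x1 x2 y0 y1 y2 : EuclideanSpace ℝ (Fin n))
    (hx0 : ∀ i, x0 i = 1 ∨ x0 i = -1) (hx1 : ∀ i, x1 i = 1 ∨ x1 i = -1)
    (hx2 : ∀ i, x2 i = 1 ∨ x2 i = -1)
    (hy0 : ∀ i, y0 i = 1 ∨ y0 i = -1) (hy1 : ∀ i, y1 i = 1 ∨ y1 i = -1)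
    (hy2 : ∀ i, y2 i = 1 ∨ y2 i = -1)
    (e01 : (univ.filter fun i => ¬ x0 i = x1 i).card = (univ.filter fun i => ¬ y0 i = y1 i).card)
    (e02 : (univ.filter fun i => ¬ x0 i = x2 i).card = (univ.filter fun i => ¬ y0 i = y2 i).card)
    (e12 : (univ.filter fun i => ¬ x1 i = x2 i).card = (univ.filter fun i => ¬ y1 i = y2 i).card)
    (v : Bool × Bool) :
    (univ.filter fun i =>
      ((if x1 i = x0 i then true else false), (if x2 i = x0 i then true else false)) = v).card
    = (univ.filter fun i =>
      ((if y1 i = y0 i then true else false), (if y2 i = y0 i then true else false)) = v).card := by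
  have SX := pattern_sum' x0 x1 x2 hx0 hx1 hx2 v
  have SY := pattern_sum' y0 y1 y2 hy0 hy1 hy2 v
  rw [sum_split'] at SX SY
  rw [e01, e02, e12] at SX
  have h0 := SX.trans SY.symm
  have h2 : (2:ℤ) * (univ.filter fun i =>
      ((if x1 i = x0 i then true else false), (if x2 i = x0 i then true else false)) = v).card
      = 2 * (univ.filter fun i =>
      ((if y1 i = y0 i then true else false), (if y2 i = y0 i then true else false)) = v).card := by
    linarith
  have := mul_left_cancel₀ (by norm_num : (2:ℤ) ≠ 0) h2
  exact_mod_cast this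

private lemma exists_perm_of_fiber_card' {n : ℕ} {V : Type*} [Fintype V] [DecidableEq V]
    (f g : Fin n → V)
    (h : ∀ v, (univ.filter fun i => f i = v).card = (univ.filter fun i => g i = v).card) :
    ∃ σ : Equiv.Perm (Fin n), ∀ j, g (σ j) = f j := by
  have e : ∀ v, {i // f i = v} ≃ {i // g i = v} := fun v =>
    Fintype.equivOfCardEq (by
      rw [Fintype.card_subtype, Fintype.card_subtype]
      exact h v)
  exact ⟨((Equiv.sigmaFiberEquiv f).symm.trans (Equiv.sigmaCongrRight e)).trans
      (Equiv.sigmaFiberEquiv g), fun j => (e (f j) ⟨j, rfl⟩).2⟩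

private lemma card_filter_perm' {n : ℕ} (σ : Equiv.Perm (Fin n)) (p : Fin n → Prop) :
    (univ.filter fun i => p (σ i)).card = (univ.filter p).card := by
  refine Finset.card_bij (fun i _ => σ i) ?_ ?_ ?_
  · intro a ha
    simp only [Finset.mem_filter, Finset.mem_univ, true_and] at ha ⊢
    exact ha
  · intro a _ b _ hab; exact σ.injective hab
  · intro b hb
    simp only [Finset.mem_filter, Finset.mem_univ, true_and] at hb
    exact ⟨σ.symm b, by simp only [Finset.mem_filter, Finset.mem_univ, true_and,
      Equiv.apply_symm_apply]; exact hb, by simp⟩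

private lemma ite_tf_iff' {P Q : Prop} [Decidable P] [Decidable Q]
    (h : (if P then true else false) = (if Q then true else false)) : P ↔ Q := by
  split at h <;> split at h <;> simp_all

private lemma sign_step' {u u' w w' : ℝ} (hu : u = 1 ∨ u = -1) (hu' : u' = 1 ∨ u' = -1)
    (hw : w = 1 ∨ w = -1) (hw' : w' = 1 ∨ w' = -1) (h : (u = u') ↔ (w = w')) :
    w' * u' * u = w := by
  rcases hu with rfl | rfl <;> rcases hu' with rfl | rfl <;>
    rcases hw with rfl | rfl <;> rcases hw' with rfl | rfl <;> revert h <;> norm_num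

private lemma parity_ne' {n : ℕ} (x y : Fin n → ℝ)
    (hx : ∀ i, x i = 1 ∨ x i = -1) (hy : ∀ i, y i = 1 ∨ y i = -1) :
    (univ.filter fun i => ¬ x i = y i).card
      + 2 * (univ.filter fun i => x i = -1 ∧ y i = -1).card
    = (univ.filter fun i => x i = -1).card + (univ.filter fun i => y i = -1).card := by
  rw [Finset.card_filter, Finset.card_filter, Finset.card_filter, Finset.card_filter,
    Finset.mul_sum, ← Finset.sum_add_distrib, ← Finset.sum_add_distrib]
  refine Finset.sum_congr rfl fun i _ => ?_
  rcases hx i with h | h <;> rcases hy i with h' | h' <;> simp [h, h'] <;> norm_num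

/-- For `n ≥ 4`, the vertex set of the `n`-demihypercube is 3-point
homogeneous under the group of signed coordinate permutations preserving it
(coordinate permutations composed with sign changes of an even number of
coordinates). -/
theorem stmt13 (n : ℕ) (hn : 4 ≤ n)
    (A B : Fin 3 → EuclideanSpace ℝ (Fin n))
    (hA : ∀ k, A k ∈ demicubeVertices n) (hB : ∀ k, B k ∈ demicubeVertices n)
    (hd : ∀ k l, dist (A k) (A l) = dist (B k) (B l)) :
    ∃ (σ : Equiv.Perm (Fin n)) (ε : Fin n → ℝ),
      (∀ i, ε i = 1 ∨ ε i = -1) ∧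
      Even (Finset.univ.filter (fun i => ε i = -1)).card ∧
      ∀ k, (WithLp.toLp 2 (fun i => ε i * A k (σ.symm i)) : EuclideanSpace ℝ (Fin n)) = B k := by
  have hA' : ∀ k, ∀ i, A k i = 1 ∨ A k i = -1 := fun k => (hA k).1
  have hB' : ∀ k, ∀ i, B k i = 1 ∨ B k i = -1 := fun k => (hB k).1
  have e01 := ham_of_dist' (hA' 0) (hA' 1) (hB' 0) (hB' 1) (hd 0 1)
  have e02 := ham_of_dist' (hA' 0) (hA' 2) (hB' 0) (hB' 2) (hd 0 2)
  have e12 := ham_of_dist' (hA' 1) (hA' 2) (hB' 1) (hB' 2) (hd 1 2)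
  have hc := count_eq' (A 0) (A 1) (A 2) (B 0) (B 1) (B 2)
    (hA' 0) (hA' 1) (hA' 2) (hB' 0) (hB' 1) (hB' 2) e01 e02 e12
  obtain ⟨σ, hσ⟩ := exists_perm_of_fiber_card'
    (fun i => ((if A 1 i = A 0 i then true else false : Bool),
      (if A 2 i = A 0 i then true else false : Bool)))
    (fun i => ((if B 1 i = B 0 i then true else false : Bool),
      (if B 2 i = B 0 i then true else false : Bool))) hc
  have hfib : ∀ i,
      (((if A 1 (σ.symm i) = A 0 (σ.symm i) then true else false : Bool),
        (if A 2 (σ.symm i) = A 0 (σ.symm i) then true else false : Bool)) : Bool × Bool)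
      = ((if B 1 i = B 0 i then true else false : Bool),
        (if B 2 i = B 0 i then true else false : Bool)) := by
    intro i
    have := hσ (σ.symm i)
    rw [Equiv.apply_symm_apply] at this
    exact this.symm
  have h1 : ∀ i, (A 1 (σ.symm i) = A 0 (σ.symm i)) ↔ (B 1 i = B 0 i) := fun i =>
    ite_tf_iff' (congrArg Prod.fst (hfib i))
  have h2 : ∀ i, (A 2 (σ.symm i) = A 0 (σ.symm i)) ↔ (B 2 i = B 0 i) := fun i =>
    ite_tf_iff' (congrArg Prod.snd (hfib i))
  refine ⟨σ, fun i => B 0 i * A 0 (σ.symm i), ?_, ?_, ?_⟩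
  · intro i
    rcases hB' 0 i with h | h <;> rcases hA' 0 (σ.symm i) with h' | h' <;>
      simp only [h, h'] <;> norm_num
  · have hfe : (univ.filter fun i => B 0 i * A 0 (σ.symm i) = -1)
        = (univ.filter fun i => ¬ B 0 i = A 0 (σ.symm i)) := by
      refine Finset.filter_congr fun i _ => ?_
      rcases hB' 0 i with h | h <;> rcases hA' 0 (σ.symm i) with h' | h' <;>
        simp only [h, h'] <;> norm_num
    rw [hfe]
    have hp : (univ.filter fun i => ¬ B 0 i = A 0 (σ.symm i)).card
        + 2 * (univ.filter fun i => B 0 i = -1 ∧ A 0 (σ.symm i) = -1).card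
        = (univ.filter fun i => B 0 i = -1).card
          + (univ.filter fun i => A 0 (σ.symm i) = -1).card :=
      parity_ne' (fun i => B 0 i) (fun i => A 0 (σ.symm i)) (hB' 0)
        (fun i => hA' 0 (σ.symm i))
    have hmA : (univ.filter fun i => A 0 (σ.symm i) = -1).card
        = (univ.filter fun i => A 0 i = -1).card :=
      card_filter_perm' σ.symm (fun i => A 0 i = -1)
    obtain ⟨a, ha⟩ := (hA 0).2
    obtain ⟨b, hb⟩ := (hB 0).2
    rw [Nat.even_iff]
    omega
  · intro k
    ext i
    have hu0 := hA' 0 (σ.symm i)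
    fin_cases k
    · exact sign_step' hu0 hu0 (hB' 0 i) (hB' 0 i) (by simp)
    · exact sign_step' (hA' 1 (σ.symm i)) hu0 (hB' 1 i) (hB' 0 i) (h1 i)
    · exact sign_step' (hA' 2 (σ.symm i)) hu0 (hB' 2 i) (hB' 0 i) (h2 i)
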